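/- Let r : ℂ → ℝ be C², let F = (1/2)(1+|ξ|²)²·∂r/∂ξ̄, and define the surface X : ℂ → ℂ × ℝ by X(ξ) = Φ(ξ, F(ξ), r(ξ)). Then X is orthogonal to the line congruence ξ ↦ (ξ, F(ξ)): for every ξ ∈ ℂ, ⟪∂X/∂x (ξ), U(ξ)⟫ = 0 and ⟪∂X/∂y (ξ), U(ξ)⟫ = 0, where ξ = x + iy. -/

import Mathlib

open Complex ComplexConjugate

noncomputable section

/-- The Euclidean inner product on `ℝ³ ≃ ℂ × ℝ`: `⟪(z₁,t₁),(z₂,t₂)⟫ = Re(z₁ conj z₂) + t₁ t₂`. -/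
def inner3 (p q : ℂ × ℝ) : ℝ := (p.1 * conj q.1).re + p.2 * q.2

/-- Inverse stereographic projection: the unit direction vector of the oriented line `ξ`. -/
def Udir (ξ : ℂ) : ℂ × ℝ :=
  (2 * ξ / ((1 + Complex.normSq ξ : ℝ) : ℂ),
   (1 - Complex.normSq ξ) / (1 + Complex.normSq ξ))

/-- The map `Φ : 𝕃 × ℝ → ℝ³ ≃ ℂ × ℝ` of the correspondence space. -/
def Phi (ξ η : ℂ) (r : ℝ) : ℂ × ℝ :=
  ((2 * (η - conj η * ξ ^ 2) + 2 * ξ * ((1 + Complex.normSq ξ : ℝ) : ℂ) * (r : ℂ))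
      / (((1 + Complex.normSq ξ) ^ 2 : ℝ) : ℂ),
   ((-2 * (η * conj ξ + conj η * ξ)
        + (((1 - Complex.normSq ξ * Complex.normSq ξ) * r : ℝ) : ℂ))).re
      / (1 + Complex.normSq ξ) ^ 2)

/-- Wirtinger derivative ∂/∂ξ̄ of a real-valued function, as a complex number. -/
def wdbarR (r : ℂ → ℝ) (ξ : ℂ) : ℂ :=
  (1 / 2) * ((fderiv ℝ r ξ 1 : ℝ) + Complex.I * (fderiv ℝ r ξ Complex.I : ℝ))

/-- F = (1/2)(1+|ξ|²)² ∂r/∂ξ̄. -/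
def Fcong (r : ℂ → ℝ) (ξ : ℂ) : ℂ :=
  (1 / 2) * ((1 + Complex.normSq ξ) ^ 2 : ℝ) * wdbarR r ξ

def Gsurf (r : ℂ → ℝ) (z : ℂ) : ℂ × ℝ :=
  (((fderiv ℝ r z 1 : ℝ) + Complex.I * (fderiv ℝ r z Complex.I : ℝ)
      - ((fderiv ℝ r z 1 : ℝ) - Complex.I * (fderiv ℝ r z Complex.I : ℝ)) * z ^ 2) / 2
     + 2 * z * (r z : ℝ) / ((1 + Complex.normSq z : ℝ) : ℂ),
   -(fderiv ℝ r z 1 * z.re + fderiv ℝ r z Complex.I * z.im)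
     + (1 - Complex.normSq z) * r z / (1 + Complex.normSq z))

lemma X_eq_Gsurf (r : ℂ → ℝ) (z : ℂ) : Phi z (Fcong r z) (r z) = Gsurf r z := by
  have hp0 : (0:ℝ) < 1 + Complex.normSq z := by have := Complex.normSq_nonneg z; linarith
  have hp : (1 + Complex.normSq z) ≠ 0 := ne_of_gt hp0
  have hpc : ((1 + Complex.normSq z : ℝ) : ℂ) ≠ 0 := by exact_mod_cast hp
  set a := fderiv ℝ r z 1
  set b := fderiv ℝ r z Complex.I
  set s := Complex.normSq z
  unfold Phi Fcong wdbarR Gsurf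
  refine Prod.ext ?_ ?_
  · show (2 * ((1/2) * ((1+s)^2 : ℝ) * ((1/2) * ((a:ℂ) + Complex.I * (b:ℂ)))
        - conj ((1/2) * (((1+s)^2 : ℝ):ℂ) * ((1/2) * ((a:ℂ) + Complex.I * (b:ℂ)))) * z^2)
        + 2 * z * ((1+s:ℝ):ℂ) * ((r z : ℝ):ℂ)) / (((1+s)^2 : ℝ):ℂ) = _
    have hpc' : (1 + (s:ℂ)) ≠ 0 := by push_cast at hpc ⊢; exact hpc
    simp only [map_mul, map_add, map_sub, map_one, map_div₀, Complex.conj_ofReal,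
      Complex.conj_I, map_ofNat]
    push_cast
    simp only [a, b, s] at hpc' ⊢
    field_simp [hpc']
    ring
  · show (((-2 : ℂ) * (((1/2) * (((1+s)^2 : ℝ):ℂ) * ((1/2) * ((a:ℂ) + Complex.I * (b:ℂ)))) * conj z
        + conj ((1/2) * (((1+s)^2 : ℝ):ℂ) * ((1/2) * ((a:ℂ) + Complex.I * (b:ℂ)))) * z)
        + (((1 - s*s) * r z : ℝ):ℂ))).re / (1+s)^2 = _
    rw [div_eq_iff (pow_ne_zero 2 hp)]
    simp only [map_mul, map_add, map_one, map_div₀, Complex.conj_ofReal, Complex.conj_I, map_ofNat]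
    simp only [Complex.add_re, Complex.sub_re, Complex.neg_re, Complex.mul_re, Complex.mul_im,
      Complex.add_im, Complex.sub_im, Complex.neg_im, Complex.ofReal_re, Complex.ofReal_im,
      Complex.I_re, Complex.I_im, Complex.conj_re, Complex.conj_im, Complex.one_re,
      Complex.one_im, Complex.re_ofNat, Complex.im_ofNat]
    simp only [show Complex.normSq z = s from rfl, show fderiv ℝ r z 1 = a from rfl,
      show fderiv ℝ r z Complex.I = b from rfl, show (1/2:ℂ).re = 1/2 by norm_num,
      show (1/2:ℂ).im = 0 by norm_num]
    field_simp
    ring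

lemma support_id (r : ℂ → ℝ) (z : ℂ) :
    ((Gsurf r z).1 * (2 * conj z / ((1 + Complex.normSq z : ℝ) : ℂ))).re
      + (Gsurf r z).2 * ((1 - Complex.normSq z) / (1 + Complex.normSq z)) = r z := by
  have hp0 : (0:ℝ) < 1 + Complex.normSq z := by have := Complex.normSq_nonneg z; linarith
  have hp : (1 + Complex.normSq z) ≠ 0 := ne_of_gt hp0
  have hp' : 1 + (z.re * z.re + z.im * z.im) ≠ 0 := by
    rw [← Complex.normSq_apply]; exact hp
  unfold Gsurf
  simp only [Complex.normSq_apply, Complex.div_re, Complex.div_im, Complex.add_re, Complex.add_im,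
    Complex.sub_re, Complex.sub_im, Complex.neg_re, Complex.neg_im, Complex.mul_re, Complex.mul_im,
    Complex.ofReal_re, Complex.ofReal_im, Complex.I_re, Complex.I_im, Complex.conj_re,
    Complex.conj_im, Complex.one_re, Complex.one_im, Complex.re_ofNat, Complex.im_ofNat,
    Complex.normSq_ofReal, Complex.normSq_apply, pow_two]
  field_simp
  ring

lemma support_id' (r : ℂ → ℝ) (z : ℂ) : inner3 (Gsurf r z) (Udir z) = r z := by
  have h := support_id r z
  unfold inner3 Udir
  rw [map_div₀, map_mul, Complex.conj_ofReal, map_ofNat]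
  exact h

set_option maxHeartbeats 1000000 in
lemma key (r : ℂ → ℝ) (hr : ContDiff ℝ 2 r)
    (X : ℂ → ℂ × ℝ) (hX : ∀ ξ, X ξ = Phi ξ (Fcong r ξ) (r ξ))
    (ξ v : ℂ) : inner3 (fderiv ℝ X ξ v) (Udir ξ) = 0 := by
  have hrd : Differentiable ℝ r := hr.differentiable (by norm_num)
  have hXG : X = Gsurf r := funext fun z => (hX z).trans (X_eq_Gsurf r z)
  rw [hXG]
  have hA : Differentiable ℝ (fun z => fderiv ℝ r z 1) :=
    (ContinuousLinearMap.apply ℝ ℝ (1:ℂ)).differentiable.comp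
      ((hr.fderiv_right (m := 1) (by norm_num)).differentiable one_ne_zero)
  have hB : Differentiable ℝ (fun z => fderiv ℝ r z Complex.I) :=
    (ContinuousLinearMap.apply ℝ ℝ (Complex.I)).differentiable.comp
      ((hr.fderiv_right (m := 1) (by norm_num)).differentiable one_ne_zero)
  have hre : Differentiable ℝ (fun z : ℂ => z.re) := Complex.reCLM.differentiable
  have him : Differentiable ℝ (fun z : ℂ => z.im) := Complex.imCLM.differentiable
  have hns : Differentiable ℝ (fun z : ℂ => Complex.normSq z) := by
    have h : (fun z : ℂ => Complex.normSq z) = fun z : ℂ => z.re * z.re + z.im * z.im :=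
      funext fun z => Complex.normSq_apply z
    rw [h]; exact (hre.mul hre).add (him.mul him)
  have hp0 : (0:ℝ) < 1 + Complex.normSq ξ := by have := Complex.normSq_nonneg ξ; linarith
  have hp : (1 + Complex.normSq ξ) ≠ 0 := ne_of_gt hp0
  have hpc : ((1 + Complex.normSq ξ : ℝ) : ℂ) ≠ 0 := by exact_mod_cast hp
  -- differentiability of Gsurf at ξ
  have hAc : Differentiable ℝ (fun z : ℂ => ((fderiv ℝ r z 1 : ℝ) : ℂ)) :=
    Complex.ofRealCLM.differentiable.comp hA
  have hBc : Differentiable ℝ (fun z : ℂ => ((fderiv ℝ r z Complex.I : ℝ) : ℂ)) :=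
    Complex.ofRealCLM.differentiable.comp hB
  have hrc : Differentiable ℝ (fun z : ℂ => ((r z : ℝ) : ℂ)) :=
    Complex.ofRealCLM.differentiable.comp hrd
  have hpden : Differentiable ℝ (fun z : ℂ => ((1 + Complex.normSq z : ℝ) : ℂ)) :=
    Complex.ofRealCLM.differentiable.comp ((differentiable_const 1).add hns)
  have hGd : DifferentiableAt ℝ (Gsurf r) ξ := by
    unfold Gsurf
    simp only [div_eq_mul_inv]
    refine DifferentiableAt.prodMk ?_ ?_
    · refine DifferentiableAt.add ?_ ?_
      · exact (((hAc ξ).add ((differentiableAt_const Complex.I).mul (hBc ξ))).sub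
          ((((hAc ξ).sub ((differentiableAt_const Complex.I).mul (hBc ξ)))).mul
            (differentiableAt_fun_id.pow 2))).mul_const _
      · exact (((differentiableAt_const 2).mul differentiableAt_fun_id).mul (hrc ξ)).mul
          ((hpden ξ).inv hpc)
    · refine DifferentiableAt.add ?_ ?_
      · exact (((hA ξ).mul (hre ξ)).add ((hB ξ).mul (him ξ))).neg
      · exact (((differentiableAt_const 1).sub (hns ξ)).mul (hrd ξ)).mul
          (((differentiableAt_const 1).add (hns ξ)).inv hp)
  -- the line
  set γ : ℝ → ℂ := fun t => ξ + (t:ℂ) * v with hγdef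
  have hγ : HasDerivAt γ v 0 := by
    simpa [hγdef] using (Complex.ofRealCLM.hasDerivAt.mul_const v).const_add ξ
  have hγ0 : γ 0 = ξ := by simp [hγdef]
  have hlineG : HasDerivAt (fun t => Gsurf r (γ t)) (fderiv ℝ (Gsurf r) ξ v) 0 := by
    have hGd' : HasFDerivAt (Gsurf r) (fderiv ℝ (Gsurf r) ξ) (γ 0) := by
      rw [hγ0]; exact hGd.hasFDerivAt
    exact hGd'.comp_hasDerivAt 0 hγ
  have h1 : HasDerivAt (fun t => (Gsurf r (γ t)).1) (fderiv ℝ (Gsurf r) ξ v).1 0 :=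
    (ContinuousLinearMap.fst ℝ ℂ ℝ).hasFDerivAt.comp_hasDerivAt 0 hlineG
  have h2 : HasDerivAt (fun t => (Gsurf r (γ t)).2) (fderiv ℝ (Gsurf r) ξ v).2 0 :=
    (ContinuousLinearMap.snd ℝ ℂ ℝ).hasFDerivAt.comp_hasDerivAt 0 hlineG
  -- auxiliary real/complex curves
  have hS0 : (ξ.re + (0:ℝ)*v.re)^2 + (ξ.im + (0:ℝ)*v.im)^2 = Complex.normSq ξ := by
    simp [Complex.normSq_apply]; ring
  have hdS : HasDerivAt (fun t : ℝ => (ξ.re + t*v.re)^2 + (ξ.im + t*v.im)^2)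
      (2*(ξ.re*v.re + ξ.im*v.im)) 0 := by
    have ha : HasDerivAt (fun t : ℝ => ξ.re + t * v.re) v.re 0 :=
      HasDerivAt.const_add ξ.re (hasDerivAt_mul_const (x := (0:ℝ)) v.re)
    have hb : HasDerivAt (fun t : ℝ => ξ.im + t * v.im) v.im 0 :=
      HasDerivAt.const_add ξ.im (hasDerivAt_mul_const (x := (0:ℝ)) v.im)
    have h := (ha.fun_pow 2).fun_add (hb.fun_pow 2)
    refine h.congr_deriv ?_
    norm_num
    ring
  have hdnum : HasDerivAt (fun t : ℝ => 2 * (conj ξ + (t:ℂ) * conj v)) (2 * conj v) 0 := by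
    simpa using ((Complex.ofRealCLM.hasDerivAt.mul_const (conj v)).const_add (conj ξ)).const_mul 2
  have hSd0 : ((1 + ((ξ.re + (0:ℝ)*v.re)^2 + (ξ.im + (0:ℝ)*v.im)^2) : ℝ) : ℂ) ≠ 0 := by
    rw [hS0]; exact hpc
  have hdden : HasDerivAt (fun t : ℝ => ((1 + ((ξ.re + t*v.re)^2 + (ξ.im + t*v.im)^2) : ℝ) : ℂ))
      ((2*(ξ.re*v.re + ξ.im*v.im) : ℝ) : ℂ) 0 := (hdS.const_add 1).ofReal_comp
  have hc1d0 := hdnum.fun_div hdden hSd0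
  have h10 : (1 + ((ξ.re + (0:ℝ)*v.re)^2 + (ξ.im + (0:ℝ)*v.im)^2) : ℝ) ≠ 0 := by
    rw [hS0]; exact hp
  have hu2d0 := (hdS.const_sub 1).fun_div (hdS.const_add 1) h10
  have hcγ : ∀ t : ℝ, conj ξ + ((t:ℝ):ℂ) * conj v = conj (γ t) := fun t => by
    simp [hγdef, map_add, map_mul, Complex.conj_ofReal]
  have hnγ : ∀ t : ℝ, (ξ.re + t*v.re)^2 + (ξ.im + t*v.im)^2 = Complex.normSq (γ t) := fun t => by
    simp [hγdef, Complex.normSq_apply, Complex.add_re, Complex.add_im, Complex.mul_re,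
      Complex.mul_im, Complex.ofReal_re, Complex.ofReal_im]
    ring
  have hc1eq : (fun t : ℝ => 2 * (conj ξ + ((t:ℝ):ℂ) * conj v)
      / ((1 + ((ξ.re + t*v.re)^2 + (ξ.im + t*v.im)^2) : ℝ) : ℂ))
      = fun t : ℝ => conj ((Udir (γ t)).1) := by
    funext t
    rw [hcγ t, hnγ t]
    simp [Udir, map_div₀, Complex.conj_ofReal, map_ofNat]
  have hu2eq : (fun t : ℝ => (1 - ((ξ.re + t*v.re)^2 + (ξ.im + t*v.im)^2))
      / (1 + ((ξ.re + t*v.re)^2 + (ξ.im + t*v.im)^2)))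
      = fun t : ℝ => (Udir (γ t)).2 := by
    funext t
    rw [hnγ t]
    simp [Udir]
  have hc1d := hc1eq ▸ hc1d0
  have hu2d := hu2eq ▸ hu2d0
  -- product rule
  have hm1 := Complex.reCLM.hasFDerivAt.comp_hasDerivAt 0 (h1.mul hc1d)
  have hm2 := h2.mul hu2d
  have hsum := hm1.add hm2
  -- the scalar curve is r ∘ γ
  have hrline : HasDerivAt (fun t => r (γ t)) (fderiv ℝ r ξ v) 0 := by
    have hrd' : HasFDerivAt r (fderiv ℝ r ξ) (γ 0) := by
      rw [hγ0]; exact (hrd ξ).hasFDerivAt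
    exact hrd'.comp_hasDerivAt 0 hγ
  have hrline2 : HasDerivAt (fun t : ℝ =>
      ((Gsurf r (γ t)).1 * conj ((Udir (γ t)).1)).re
        + (Gsurf r (γ t)).2 * (Udir (γ t)).2)
      (fderiv ℝ r ξ v) 0 := by
    have hfun : (fun t : ℝ =>
        ((Gsurf r (γ t)).1 * conj ((Udir (γ t)).1)).re
          + (Gsurf r (γ t)).2 * (Udir (γ t)).2) = fun t => r (γ t) :=
      funext fun t => support_id' r (γ t)
    rw [hfun]
    exact hrline
  have hval := hsum.unique hrline2
  simp only [hγ0, Complex.reCLM_apply, Complex.add_re] at hval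
  have hdr : fderiv ℝ r ξ v = v.re * fderiv ℝ r ξ 1 + v.im * fderiv ℝ r ξ Complex.I := by
    have hv : v = v.re • (1:ℂ) + v.im • Complex.I := by
      apply Complex.ext <;> simp
    nth_rewrite 1 [hv]
    rw [map_add, map_smul, map_smul]
    simp [smul_eq_mul]
  have hzero : ((Gsurf r ξ).1 *
        ((2 * (starRingEnd ℂ) v * ((1 + ((ξ.re + 0 * v.re) ^ 2 + (ξ.im + 0 * v.im) ^ 2) : ℝ) : ℂ) -
            2 * ((starRingEnd ℂ) ξ + ((0:ℝ) : ℂ) * (starRingEnd ℂ) v)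
              * ((2 * (ξ.re * v.re + ξ.im * v.im) : ℝ) : ℂ)) /
          ((1 + ((ξ.re + 0 * v.re) ^ 2 + (ξ.im + 0 * v.im) ^ 2) : ℝ) : ℂ) ^ 2)).re +
      (Gsurf r ξ).2 *
        ((-(2 * (ξ.re * v.re + ξ.im * v.im)) * (1 + ((ξ.re + 0 * v.re) ^ 2 + (ξ.im + 0 * v.im) ^ 2)) -
            (1 - ((ξ.re + 0 * v.re) ^ 2 + (ξ.im + 0 * v.im) ^ 2)) * (2 * (ξ.re * v.re + ξ.im * v.im))) /
          (1 + ((ξ.re + 0 * v.re) ^ 2 + (ξ.im + 0 * v.im) ^ 2)) ^ 2)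
      = fderiv ℝ r ξ v := by
    rw [hdr]
    have hp' : 1 + (ξ.re * ξ.re + ξ.im * ξ.im) ≠ 0 := by
      rw [← Complex.normSq_apply]; exact hp
    unfold Gsurf
    simp only [Complex.normSq_apply, Complex.div_re, Complex.div_im, Complex.add_re,
      Complex.add_im, Complex.sub_re, Complex.sub_im, Complex.neg_re, Complex.neg_im,
      Complex.mul_re, Complex.mul_im, Complex.ofReal_re, Complex.ofReal_im, Complex.I_re,
      Complex.I_im, Complex.conj_re, Complex.conj_im, Complex.one_re, Complex.one_im,
      Complex.re_ofNat, Complex.im_ofNat, Complex.normSq_ofReal, Complex.normSq_apply,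
      Complex.ofReal_pow, Complex.ofReal_add, Complex.ofReal_mul, Complex.ofReal_one,
      Complex.ofReal_zero, pow_two]
    simp only [Complex.zero_re, Complex.zero_im, zero_mul, mul_zero, add_zero, zero_add, sub_zero,
      zero_sub, neg_zero, ne_eq, OfNat.ofNat_ne_zero, not_false_eq_true, zero_pow, sub_neg_eq_add, neg_neg]
    field_simp
    ring
  show ((fderiv ℝ (Gsurf r) ξ v).1 * conj ((Udir ξ).1)).re
      + (fderiv ℝ (Gsurf r) ξ v).2 * (Udir ξ).2 = 0
  linarith [hval, hzero]

/-- Theorem 1 of the paper, one direction: the surface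
`X(ξ) = Φ(ξ, F(ξ), r(ξ))` built from a support function `r` is orthogonal to the
line congruence `ξ ↦ (ξ, F(ξ))`. -/
theorem support_function_surface_orthogonal_to_congruence
    (r : ℂ → ℝ) (hr : ContDiff ℝ 2 r)
    (X : ℂ → ℂ × ℝ) (hX : ∀ ξ, X ξ = Phi ξ (Fcong r ξ) (r ξ)) :
    ∀ ξ : ℂ,
      inner3 (fderiv ℝ X ξ 1) (Udir ξ) = 0 ∧
      inner3 (fderiv ℝ X ξ Complex.I) (Udir ξ) = 0 := by
  exact fun ξ => ⟨key r hr X hX ξ 1, key r hr X hX ξ Complex.I⟩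

end
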